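/- Let δ, κ > 0 and let β be the unique solution in (0, ∞) of tanh(√(2δ)·β) = δ(2κβ − δ)/(κ√(2δ)). Then tanh(√(2δ)·x) − δ(2κx − δ)/(κ√(2δ)) > 0 for all x ∈ [0, β), and tanh(√(2δ)·x) − δ(2κx − δ)/(κ√(2δ)) < 0 for all x ∈ (β, ∞). -/

import Mathlib

open Real

lemma hasDerivAt_tanh' (x : ℝ) : HasDerivAt Real.tanh (1 / Real.cosh x ^ 2) x := by
  have h : HasDerivAt (fun y => Real.sinh y / Real.cosh y)
      ((Real.cosh x * Real.cosh x - Real.sinh x * Real.sinh x) / Real.cosh x ^ 2) x :=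
    (Real.hasDerivAt_sinh x).div (Real.hasDerivAt_cosh x) (Real.cosh_pos x).ne'
  have hx : Real.cosh x * Real.cosh x - Real.sinh x * Real.sinh x = 1 := by
    have := Real.cosh_sq_sub_sinh_sq x
    ring_nf
    ring_nf at this
    linarith
  simpa [funext Real.tanh_eq_sinh_div_cosh, hx] using h

lemma continuous_tanh' : Continuous Real.tanh := by
  rw [funext Real.tanh_eq_sinh_div_cosh]
  exact Real.continuous_sinh.div Real.continuous_cosh fun x => (Real.cosh_pos x).ne'
  
lemma tanh_sub_strictAnti (c : ℝ) (hc : 0 < c) :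
    StrictAntiOn (fun x : ℝ => Real.tanh (c * x) - c * x) (Set.Ici 0) := by
  apply strictAntiOn_of_deriv_neg (convex_Ici 0)
  · exact ((continuous_tanh'.comp (continuous_const.mul continuous_id)).sub
      (continuous_const.mul continuous_id)).continuousOn
  · intro x hx
    rw [interior_Ici] at hx
    have hD : HasDerivAt (fun x : ℝ => Real.tanh (c * x) - c * x)
        (1 / Real.cosh (c * x) ^ 2 * c - c) x := by
      have h1 := (hasDerivAt_tanh' (c * x)).comp x ((hasDerivAt_id x).const_mul c)
      simp only [Function.comp, id_eq, mul_one] at h1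
      exact (h1.sub ((hasDerivAt_id x).const_mul c)).congr_deriv (by ring)
    rw [hD.deriv]
    have hcx : (1:ℝ) < Real.cosh (c * x) := Real.one_lt_cosh.mpr (mul_pos hc hx).ne'
    have h2 : 1 / Real.cosh (c * x) ^ 2 < 1 := by
      rw [div_lt_one (by positivity)]
      nlinarith
    nlinarith

/-- Let `δ, κ > 0` and let `β` be the unique solution in `(0, ∞)` of
`tanh(√(2δ)·β) = δ(2κβ − δ)/(κ√(2δ))`. Then
`tanh(√(2δ)·x) − δ(2κx − δ)/(κ√(2δ)) > 0` for all `x ∈ [0, β)`, and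
`tanh(√(2δ)·x) − δ(2κx − δ)/(κ√(2δ)) < 0` for all `x ∈ (β, ∞)`. -/
theorem statement1 (δ κ β : ℝ) (hδ : 0 < δ) (hκ : 0 < κ) (hβ : 0 < β)
    (heq : Real.tanh (Real.sqrt (2*δ) * β) = δ * (2*κ*β - δ) / (κ * Real.sqrt (2*δ))) :
    (∀ x : ℝ, 0 ≤ x → x < β →
      0 < Real.tanh (Real.sqrt (2*δ) * x) - δ * (2*κ*x - δ) / (κ * Real.sqrt (2*δ))) ∧
    (∀ x : ℝ, β < x →
      Real.tanh (Real.sqrt (2*δ) * x) - δ * (2*κ*x - δ) / (κ * Real.sqrt (2*δ)) < 0) := by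
  set c := Real.sqrt (2*δ) with hcdef
  have hc : 0 < c := Real.sqrt_pos.mpr (by linarith)
  have hc2 : c * c = 2 * δ := Real.mul_self_sqrt (by linarith)
  have key : ∀ x : ℝ, δ * (2*κ*x - δ) / (κ * c) = c * x - δ^2 / (κ * c) := by
    intro x
    field_simp
    linear_combination -κ * x * hc2
  have hanti := tanh_sub_strictAnti c hc
  have hβ0 : Real.tanh (c * β) - c * β = - (δ^2 / (κ * c)) := by
    rw [heq, key]; ring
  constructor
  · intro x hx hxβ
    have := hanti (Set.mem_Ici.mpr hx) (Set.mem_Ici.mpr hβ.le) hxβ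
    rw [key x]
    simp only at this
    linarith [hβ0]
  · intro x hx
    have := hanti (Set.mem_Ici.mpr hβ.le) (Set.mem_Ici.mpr (hβ.le.trans hx.le)) hx
    rw [key x]
    simp only at this
    linarith [hβ0]
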